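/- If f is the indicator function of F ⊆ {-1,1}^m, then the vanishing ideal of F satisfies I(F) = ⟨x₁²-1, ..., x_m²-1, f - 1⟩. -/

import Mathlib

open MvPolynomial

/-- A multilinear polynomial vanishing on the whole cube `{±1}^m` is zero. -/
lemma multilinear_vanish_eq_zero (m : ℕ) (q : MvPolynomial (Fin m) ℚ)
    (hml : ∀ d ∈ q.support, ∀ i, d i ≤ 1)
    (hv : ∀ x : Fin m → ℚ, (∀ i, x i = 1 ∨ x i = -1) → eval x q = 0) :
    q = 0 := by
  by_contra hq
  obtain ⟨s, hs⟩ := Finset.nonempty_iff_ne_empty.mpr (fun h => hq (support_eq_empty.mp h))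
  set S : Finset ℚ := {1, -1} with hS
  set T : Finset (Fin m → ℚ) := Fintype.piFinset fun _ => S with hT
  have hmemS : ∀ x ∈ T, ∀ i, x i = 1 ∨ x i = -1 := by
    intro x hx i
    have := Fintype.mem_piFinset.mp hx i
    simpa [hS] using this
  -- The weighted sum is zero
  have h0 : ∑ x ∈ T, eval x q * ∏ i, x i ^ s i = 0 := by
    apply Finset.sum_eq_zero
    intro x hx
    rw [hv x (hmemS x hx), zero_mul]
  -- compute the sum
  have hcompute : ∑ x ∈ T, eval x q * ∏ i, x i ^ s i
      = ∑ d ∈ q.support, coeff d q * ∏ i, ((1:ℚ) ^ (d i + s i) + (-1) ^ (d i + s i)) := by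
    have step1 : ∀ x ∈ T, eval x q * ∏ i, x i ^ s i
        = ∑ d ∈ q.support, coeff d q * ∏ i, x i ^ (d i + s i) := by
      intro x hx
      rw [eval_eq', Finset.sum_mul]
      apply Finset.sum_congr rfl
      intro d _
      rw [mul_assoc, ← Finset.prod_mul_distrib]
      simp [pow_add]
    rw [Finset.sum_congr rfl step1, Finset.sum_comm]
    apply Finset.sum_congr rfl
    intro d _
    rw [← Finset.mul_sum]
    congr 1
    rw [← Finset.prod_univ_sum (fun _ => S) (fun i t => t ^ (d i + s i))]
    apply Finset.prod_congr rfl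
    intro i _
    rw [hS, Finset.sum_pair (by norm_num : (1:ℚ) ≠ -1), one_pow]
  -- each term with d ≠ s vanishes
  have hterm : ∀ d ∈ q.support, d ≠ s →
      coeff d q * ∏ i, ((1:ℚ) ^ (d i + s i) + (-1) ^ (d i + s i)) = 0 := by
    intro d hd hds
    have : ∃ i, d i ≠ s i := by
      by_contra h
      push_neg at h
      exact hds (Finsupp.ext h)
    obtain ⟨i, hi⟩ := this
    have h1 : d i ≤ 1 := hml d hd i
    have h2 : s i ≤ 1 := hml s hs i
    have hodd : d i + s i = 1 := by omega
    have : ((1:ℚ) ^ (d i + s i) + (-1) ^ (d i + s i)) = 0 := by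
      rw [hodd]; ring
    rw [Finset.prod_eq_zero (Finset.mem_univ i) this, mul_zero]
  have hsum : ∑ d ∈ q.support, coeff d q * ∏ i, ((1:ℚ) ^ (d i + s i) + (-1) ^ (d i + s i))
      = coeff s q * 2 ^ m := by
    rw [Finset.sum_eq_single s hterm (fun h => absurd hs h)]
    congr 1
    have : ∀ i : Fin m, ((1:ℚ) ^ (s i + s i) + (-1) ^ (s i + s i)) = 2 := by
      intro i
      rw [one_pow, ← two_mul, pow_mul]
      norm_num
    rw [Finset.prod_congr rfl (fun i _ => this i)]
    simp
  have : coeff s q * 2 ^ m = 0 := by rw [← hsum, ← hcompute, h0]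
  have hc : coeff s q = 0 := by
    have h2 : (2:ℚ) ^ m ≠ 0 := by positivity
    exact (mul_eq_zero.mp this).resolve_right h2
  exact (mem_support_iff.mp hs) hc

/-- A polynomial vanishing on the cube lies in the ideal generated by the `X i ^ 2 - 1`. -/
lemma vanish_cube_mem_span (m : ℕ) (p : MvPolynomial (Fin m) ℚ)
    (hv : ∀ x : Fin m → ℚ, (∀ i, x i = 1 ∨ x i = -1) → eval x p = 0) :
    p ∈ Ideal.span (Set.range fun i : Fin m => (X i : MvPolynomial (Fin m) ℚ) ^ 2 - 1) := by
  set I0 : Ideal (MvPolynomial (Fin m) ℚ) :=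
    Ideal.span (Set.range fun i : Fin m => (X i : MvPolynomial (Fin m) ℚ) ^ 2 - 1) with hI0
  -- the reduction map on exponents
  set red : (Fin m →₀ ℕ) → (Fin m →₀ ℕ) := fun d => d.mapRange (· % 2) (Nat.zero_mod 2) with hred
  set q : MvPolynomial (Fin m) ℚ := ∑ d ∈ p.support, monomial (red d) (coeff d p) with hq
  -- p - q ∈ I0, via the quotient ring
  have hsq : ∀ i : Fin m, (Ideal.Quotient.mk I0 (X i)) ^ 2 = 1 := by
    intro i
    have h : Ideal.Quotient.mk I0 ((X i : MvPolynomial (Fin m) ℚ) ^ 2 - 1) = 0 := by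
      rw [Ideal.Quotient.eq_zero_iff_mem, hI0]
      exact Ideal.subset_span ⟨i, rfl⟩
    rw [map_sub, map_pow, map_one, sub_eq_zero] at h
    exact h
  have hpowred : ∀ (i : Fin m) (n : ℕ),
      (Ideal.Quotient.mk I0 (X i)) ^ n = (Ideal.Quotient.mk I0 (X i)) ^ (n % 2) := by
    intro i n
    conv_lhs => rw [← Nat.div_add_mod n 2]
    rw [pow_add, pow_mul, hsq, one_pow, one_mul]
  have hmon : ∀ (d : Fin m →₀ ℕ) (c : ℚ),
      Ideal.Quotient.mk I0 (monomial d c) = Ideal.Quotient.mk I0 (monomial (red d) c) := by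
    intro d c
    rw [monomial_eq, monomial_eq, Finsupp.prod_fintype _ _ (fun i => pow_zero _),
        Finsupp.prod_fintype _ _ (fun i => pow_zero _)]
    rw [map_mul, map_mul, map_prod, map_prod]
    refine congrArg _ (Finset.prod_congr rfl fun i _ => ?_)
    have hri : (red d) i = d i % 2 := by simp [hred, Finsupp.mapRange_apply]
    rw [map_pow, map_pow, hri, hpowred i (d i)]
  have hpq : p - q ∈ I0 := by
    rw [← Ideal.Quotient.eq_zero_iff_mem, map_sub, sub_eq_zero]
    conv_lhs => rw [p.as_sum]
    rw [hq, map_sum, map_sum]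
    exact Finset.sum_congr rfl fun d _ => hmon d (coeff d p)
  -- I0 is contained in the vanishing ideal of the cube
  have hI0v : ∀ r ∈ I0, ∀ x : Fin m → ℚ, (∀ i, x i = 1 ∨ x i = -1) → eval x r = 0 := by
    have hle : I0 ≤ vanishingIdeal ℚ {y : Fin m → ℚ | ∀ i, y i = 1 ∨ y i = -1} := by
      rw [hI0, Ideal.span_le]
      rintro r ⟨i, rfl⟩
      rw [SetLike.mem_coe, mem_vanishingIdeal_iff]
      intro y hy
      rcases hy i with h | h <;> simp [h]
    intro r hr x hx
    exact mem_vanishingIdeal_iff.mp (hle hr) x hx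
  -- q is multilinear and vanishes on the cube, hence q = 0
  have hqml : ∀ e ∈ q.support, ∀ i, e i ≤ 1 := by
    intro e he i
    have hne := mem_support_iff.mp he
    rw [hq] at hne
    have : ∃ d ∈ p.support, coeff e (monomial (red d) (coeff d p)) ≠ 0 := by
      by_contra h
      push_neg at h
      apply hne
      rw [coeff_sum]
      exact Finset.sum_eq_zero h
    obtain ⟨d, _, hd⟩ := this
    have : e = red d := by
      by_contra h
      rw [coeff_monomial, if_neg (fun hh => h hh.symm)] at hd
      exact hd rfl
    rw [this]
    simp only [hred, Finsupp.mapRange_apply]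
    omega
  have hqv : ∀ x : Fin m → ℚ, (∀ i, x i = 1 ∨ x i = -1) → eval x q = 0 := by
    intro x hx
    have h1 := hI0v _ hpq x hx
    rw [map_sub, hv x hx, zero_sub, neg_eq_zero] at h1
    exact h1
  have : q = 0 := multilinear_vanish_eq_zero m q hqml hqv
  have : p = p - q := by rw [this, sub_zero]
  rw [this]
  exact hpq

theorem vanishingIdeal_eq_span_indicator (m : ℕ) (F : Set (Fin m → ℚ))
    (hF : F ⊆ {x | ∀ i, x i = 1 ∨ x i = -1})
    (f : MvPolynomial (Fin m) ℚ)
    (hml : ∀ d ∈ f.support, ∀ i, d i ≤ 1)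
    (h1 : ∀ x ∈ F, MvPolynomial.eval x f = 1)
    (h0 : ∀ x ∈ {x : Fin m → ℚ | ∀ i, x i = 1 ∨ x i = -1} \ F, MvPolynomial.eval x f = 0) :
    MvPolynomial.vanishingIdeal ℚ F =
      Ideal.span ((Set.range fun i : Fin m => (X i : MvPolynomial (Fin m) ℚ) ^ 2 - 1) ∪ {f - 1}) := by
  apply le_antisymm
  · -- hard direction
    intro g hg
    have hgF : ∀ x ∈ F, eval x g = 0 := fun x hx => mem_vanishingIdeal_iff.mp hg x hx
    set J := Ideal.span ((Set.range fun i : Fin m => (X i : MvPolynomial (Fin m) ℚ) ^ 2 - 1) ∪ {f - 1}) with hJ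
    have hgf : g * f ∈ J := by
      have hcube : ∀ x : Fin m → ℚ, (∀ i, x i = 1 ∨ x i = -1) → eval x (g * f) = 0 := by
        intro x hx
        rw [map_mul]
        by_cases hxF : x ∈ F
        · rw [hgF x hxF, zero_mul]
        · rw [h0 x ⟨hx, hxF⟩, mul_zero]
      have := vanish_cube_mem_span m (g * f) hcube
      refine Ideal.span_mono ?_ this
      exact Set.subset_union_left
    have hgf1 : g * (f - 1) ∈ J := by
      apply Ideal.mul_mem_left
      exact Ideal.subset_span (Set.mem_union_right _ rfl)
    have : g = g * f - g * (f - 1) := by ring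
    rw [this]
    exact Ideal.sub_mem J hgf hgf1
  · rw [Ideal.span_le]
    rintro r (⟨i, rfl⟩ | rfl)
    · rw [SetLike.mem_coe, mem_vanishingIdeal_iff]
      intro x hx
      rcases hF hx i with h | h <;> simp [h]
    · rw [SetLike.mem_coe, mem_vanishingIdeal_iff]
      intro x hx
      rw [map_sub, aeval_eq_eval, h1 x hx]
      simp
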